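/- Let (G, F_•G, 𝔯) be a filtered Rota-Baxter group, gr G = ⊕ₙ FₙG/Fₙ₊₁G its associated graded Lie ring with bracket [x̄, ȳ] = (x,y)‾ for x ∈ FₙG, y ∈ FₘG, and gr𝔯 the induced additive map with gr𝔯(x̄) = 𝔯(x)‾ on each graded piece. Then gr𝔯 is a Rota-Baxter operator of weight 1 on the Lie ring gr G: [gr𝔯(a), gr𝔯(b)] = gr𝔯([gr𝔯(a), b] + [a, gr𝔯(b)] + [a, b]) for all homogeneous a, b ∈ gr G. -/

import Mathlib

/-- The commutator `(a,b) = a b a⁻¹ b⁻¹`. -/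
def commG {G : Type*} [Group G] (a b : G) : G := a * b * a⁻¹ * b⁻¹

open scoped commutatorElement

private lemma commG_eq {G : Type*} [Group G] (a b : G) : commG a b = ⁅a, b⁆ := rfl

private lemma conj_eq {H : Type*} [Group H] {c : H} (hc : ∀ r, c * r = r * c) (g : H) :
    g * c * g⁻¹ = c := by rw [← hc g]; group

private lemma key {H : Type*} [Group H] (x y a b : H)
    (c1 : ∀ r, commG x y * r = r * commG x y)
    (c2 : ∀ r, commG x b * r = r * commG x b)
    (c4 : ∀ r, commG a b * r = r * commG a b)
    (c5 : ∀ r, commG a (y * b) * r = r * commG a (y * b)) :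
    commG (x * a) (y * b) * commG b a = commG a y * commG x b * commG x y := by
  have e1 : commG (x * a) (y * b) = x * commG a (y * b) * x⁻¹ * commG x (y * b) := by
    simp only [commG]; group
  have e2 : commG a (y * b) = commG a y * (y * commG a b * y⁻¹) := by
    simp only [commG]; group
  have e3 : commG x (y * b) = commG x y * (y * commG x b * y⁻¹) := by
    simp only [commG]; group
  have e4 : commG b a = (commG a b)⁻¹ := by simp only [commG]; group
  rw [e1, conj_eq c5, e2, e3, e4, conj_eq c4, conj_eq c2]
  rw [mul_assoc (commG a y) (commG a b) (commG x y * commG x b),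
    c4 (commG x y * commG x b), c1 (commG x b)]
  group

/-- for a filtered Rota-Baxter group `(G, F_•G, 𝔯)`, the induced map
`gr𝔯` on the associated graded Lie ring `gr G` is a Rota-Baxter operator of weight 1:
for `x ∈ FₙG`, `y ∈ FₘG`, in `grₙ₊ₘG = Fₙ₊ₘG/Fₙ₊ₘ₊₁G` one has
`[gr𝔯 x̄, gr𝔯 ȳ] = gr𝔯([gr𝔯 x̄, ȳ] + [x̄, gr𝔯 ȳ] + [x̄, ȳ])`; at the level of group
elements, `(𝔯x, 𝔯y) ≡ 𝔯((𝔯x,y)·(x,𝔯y)·(x,y))` modulo `Fₙ₊ₘ₊₁G`. -/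
theorem stmt17 {G : Type*} [Group G] (F : ℕ → Subgroup G) (R : G → G)
    (hF1 : F 1 = ⊤)
    (hdesc : ∀ n, 1 ≤ n → F (n + 1) ≤ F n)
    (hcomm : ∀ n m, 1 ≤ n → 1 ≤ m → ⁅F n, F m⁆ ≤ F (n + m))
    (hRB : ∀ g h : G, R g * R h = R (g * R g * h * (R g)⁻¹))
    (hRF : ∀ n, 1 ≤ n → ∀ x ∈ F n, R x ∈ F n) :
    ∀ n m, 1 ≤ n → 1 ≤ m → ∀ x ∈ F n, ∀ y ∈ F m,
      (commG (R x) (R y))⁻¹ * R (commG (R x) y * commG x (R y) * commG x y) ∈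
        F (n + m + 1) := by
  -- basic consequences of the Rota-Baxter identity
  have hRe : R 1 = 1 := by
    have h := hRB 1 1
    have h1 : (1 : G) * R 1 * 1 * (R 1)⁻¹ = 1 := by group
    rw [h1] at h
    exact mul_left_cancel (a := R 1) (by rw [h, mul_one])
  have hRinv : ∀ g : G, (R g)⁻¹ = R ((R g)⁻¹ * g⁻¹ * R g) := by
    intro g
    have h := hRB g ((R g)⁻¹ * g⁻¹ * R g)
    have h2 : g * R g * ((R g)⁻¹ * g⁻¹ * R g) * (R g)⁻¹ = 1 := by group
    rw [h2, hRe] at h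
    exact inv_eq_of_mul_eq_one_right h
  intro n m hn hm x hx y hy
  set a := R x with ha
  set b := R y with hb
  have han : a ∈ F n := hRF n hn x hx
  have hbm : b ∈ F m := hRF m hm y hy
  have hFk : ∀ p ∈ F n, ∀ q ∈ F m, commG p q ∈ F (n + m) := by
    intro p hp q hq
    rw [commG_eq]
    exact hcomm n m hn hm (Subgroup.commutator_mem_commutator hp hq)
  have hba : commG b a ∈ F (n + m) := by
    rw [commG_eq]
    have h := hcomm m n hm hn (Subgroup.commutator_mem_commutator hbm han)
    rwa [add_comm m n] at h
  -- the group-level identity (𝔯x,𝔯y) = 𝔯(T)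
  have hT : commG a b = R (commG (x * a) (y * b) * commG b a) := by
    have h1 := hRB x y
    rw [← ha, ← hb] at h1
    have h2 := hRB y x
    rw [← ha, ← hb] at h2
    have h3 := hRinv (y * b * x * b⁻¹)
    rw [← h2] at h3
    have h4 := hRB (x * a * y * a⁻¹) ((b * a)⁻¹ * (y * b * x * b⁻¹)⁻¹ * (b * a))
    rw [← h1, ← h3] at h4
    calc commG a b = a * b * (b * a)⁻¹ := by simp only [commG]; group
      _ = R (x * a * y * a⁻¹ * (a * b) * ((b * a)⁻¹ * (y * b * x * b⁻¹)⁻¹ * (b * a)) *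
            (a * b)⁻¹) := h4
      _ = R (commG (x * a) (y * b) * commG b a) := by
          congr 1; simp only [commG]; group
  -- normality of the filtration subgroups
  have hnorm : ∀ j, 1 ≤ j → (F j).Normal := by
    intro j hj
    constructor
    intro u hu g
    have hco : ⁅g, u⁆ ∈ F (1 + j) :=
      hcomm 1 j le_rfl hj
        (Subgroup.commutator_mem_commutator (hF1 ▸ Subgroup.mem_top g) hu)
    have he : g * u * g⁻¹ = ⁅g, u⁆ * u := by rw [commutatorElement_def]; group
    rw [he]
    rw [add_comm 1 j] at hco
    exact Subgroup.mul_mem _ (hdesc j hj hco) hu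
  letI : (F (n + m + 1)).Normal := hnorm (n + m + 1) (by omega)
  -- elements of F (n+m) are central modulo F (n+m+1)
  have hcen : ∀ w ∈ F (n + m), ∀ g : G,
      ((w * g : G) : G ⧸ F (n + m + 1)) = ((g * w : G) : G ⧸ F (n + m + 1)) := by
    intro w hw g
    refine QuotientGroup.eq.mpr ?_
    have hco : ⁅g⁻¹, w⁻¹⁆ ∈ F (1 + (n + m)) :=
      hcomm 1 (n + m) le_rfl (by omega)
        (Subgroup.commutator_mem_commutator (hF1 ▸ Subgroup.mem_top g⁻¹) (inv_mem hw))
    have he : (w * g)⁻¹ * (g * w) = ⁅g⁻¹, w⁻¹⁆ := by rw [commutatorElement_def]; group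
    rw [he]
    have h' : 1 + (n + m) = n + m + 1 := by omega
    rwa [h'] at hco
  have hcenQ : ∀ c ∈ F (n + m), ∀ r : G ⧸ F (n + m + 1),
      (c : G ⧸ F (n + m + 1)) * r = r * (c : G ⧸ F (n + m + 1)) := by
    intro c hc r
    refine QuotientGroup.induction_on r fun g => ?_
    rw [← QuotientGroup.mk_mul, ← QuotientGroup.mk_mul]
    exact hcen c hc g
  have mkc : ∀ p q : G, ((commG p q : G) : G ⧸ F (n + m + 1)) =
      commG (p : G ⧸ F (n + m + 1)) (q : G ⧸ F (n + m + 1)) := by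
    intro p q; simp [commG]
  -- the congruence T ≡ S mod F (n+m+1)
  have hTS : (commG (x * a) (y * b) * commG b a)⁻¹ *
      (commG a y * commG x b * commG x y) ∈ F (n + m + 1) := by
    have k1 : ∀ r : G ⧸ F (n + m + 1),
        commG (x : G ⧸ F (n + m + 1)) (y : G ⧸ F (n + m + 1)) * r =
          r * commG (x : G ⧸ F (n + m + 1)) (y : G ⧸ F (n + m + 1)) := by
      intro r; rw [← mkc]; exact hcenQ _ (hFk x hx y hy) r
    have k2 : ∀ r : G ⧸ F (n + m + 1),
        commG (x : G ⧸ F (n + m + 1)) (b : G ⧸ F (n + m + 1)) * r =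
          r * commG (x : G ⧸ F (n + m + 1)) (b : G ⧸ F (n + m + 1)) := by
      intro r; rw [← mkc]; exact hcenQ _ (hFk x hx b hbm) r
    have k4 : ∀ r : G ⧸ F (n + m + 1),
        commG (a : G ⧸ F (n + m + 1)) (b : G ⧸ F (n + m + 1)) * r =
          r * commG (a : G ⧸ F (n + m + 1)) (b : G ⧸ F (n + m + 1)) := by
      intro r; rw [← mkc]; exact hcenQ _ (hFk a han b hbm) r
    have k5 : ∀ r : G ⧸ F (n + m + 1),
        commG (a : G ⧸ F (n + m + 1)) ((y : G ⧸ F (n + m + 1)) * (b : G ⧸ F (n + m + 1))) * r =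
          r * commG (a : G ⧸ F (n + m + 1)) ((y : G ⧸ F (n + m + 1)) * (b : G ⧸ F (n + m + 1))) := by
      intro r
      rw [← QuotientGroup.mk_mul, ← mkc]
      exact hcenQ _ (hFk a han (y * b) (mul_mem hy hbm)) r
    refine QuotientGroup.eq.mp ?_
    simp only [QuotientGroup.mk_mul, mkc]
    exact key _ _ _ _ k1 k2 k4 k5
  -- conclude
  rw [hT]
  rw [hRinv (commG (x * a) (y * b) * commG b a)]
  rw [hRB ((R (commG (x * a) (y * b) * commG b a))⁻¹ *
      (commG (x * a) (y * b) * commG b a)⁻¹ * R (commG (x * a) (y * b) * commG b a))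
      (commG a y * commG x b * commG x y)]
  apply hRF (n + m + 1) (by omega)
  rw [← hRinv (commG (x * a) (y * b) * commG b a)]
  have hrw :
      (R (commG (x * a) (y * b) * commG b a))⁻¹ * (commG (x * a) (y * b) * commG b a)⁻¹ *
        R (commG (x * a) (y * b) * commG b a) *
        (R (commG (x * a) (y * b) * commG b a))⁻¹ *
        (commG a y * commG x b * commG x y) *
        ((R (commG (x * a) (y * b) * commG b a))⁻¹)⁻¹ =
      (R (commG (x * a) (y * b) * commG b a))⁻¹ *
        ((commG (x * a) (y * b) * commG b a)⁻¹ *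
          (commG a y * commG x b * commG x y)) *
        ((R (commG (x * a) (y * b) * commG b a))⁻¹)⁻¹ := by group
  rw [hrw]
  exact Subgroup.Normal.conj_mem ‹(F (n + m + 1)).Normal› _ hTS _
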